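/- Let p ≥ 1 and let s be an integer with 0 < s ≤ 2^{p−1}; set l = 2^{p−1} + s. Then Σ_{j=1}^{l−1} ( 2·(j − 2^{⌊log₂ j⌋}) + 1 ) = (2^{2p−2} − 1)/3 + s². -/

import Mathlib

lemma pow4_mod3 (q : ℕ) : 4 ^ q % 3 = 1 := by
  induction q with
  | zero => rfl
  | succ q ih => rw [pow_succ]; omega

lemma aux_sum (q : ℕ) : ∀ s : ℕ, 0 < s → s ≤ 2 ^ q →
    ∑ j ∈ Finset.Icc 1 (2 ^ q + s - 1), (2 * (j - 2 ^ (Nat.log 2 j)) + 1)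
      = (4 ^ q - 1) / 3 + s ^ 2 := by
  induction q with
  | zero =>
    intro s hs0 hs
    interval_cases s
    simp
  | succ q ih =>
    intro s
    induction s with
    | zero => intro h; exact absurd h (lt_irrefl 0)
    | succ s ihs =>
      intro _ hs
      rcases Nat.eq_zero_or_pos s with hs1 | hs1
      · subst hs1
        -- sum up to 2^(q+1)
        have key := ih (2 ^ q) (Nat.pow_pos (by norm_num)) le_rfl
        have htop : 2 ^ (q + 1) + 1 - 1 = (2 ^ q + 2 ^ q - 1) + 1 := by
          have : 0 < 2 ^ q := Nat.pow_pos (by norm_num)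
          rw [pow_succ]; omega
        rw [htop, Finset.sum_Icc_succ_top (by omega), key]
        have hlog : Nat.log 2 ((2 ^ q + 2 ^ q - 1) + 1) = q + 1 := by
          have : 0 < 2 ^ q := Nat.pow_pos (by norm_num)
          have h2 : (2 ^ q + 2 ^ q - 1) + 1 = 2 ^ (q + 1) := by rw [pow_succ]; omega
          rw [h2, Nat.log_pow (by norm_num)]
        rw [hlog]
        have h2 : (2 ^ q + 2 ^ q - 1) + 1 = 2 ^ (q + 1) := by
          have : 0 < 2 ^ q := Nat.pow_pos (by norm_num)
          rw [pow_succ]; omega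
        rw [h2]
        have hsq : (2 ^ q) ^ 2 = 4 ^ q := by
          rw [← pow_mul, show (4:ℕ) = 2^2 from rfl, ← pow_mul]; ring_nf
        have h4 : (4:ℕ) ^ (q + 1) = 4 * 4 ^ q := by rw [pow_succ]; ring
        have hm := pow4_mod3 q
        have h1 : (1:ℕ) ≤ 4 ^ q := Nat.one_le_pow _ _ (by norm_num)
        rw [hsq]
        omega
      · -- s ≥ 1: add term j = 2^(q+1) + s
        have key := ihs hs1 (by omega)
        have htop : 2 ^ (q + 1) + (s + 1) - 1 = (2 ^ (q + 1) + s - 1) + 1 := by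
          have : 0 < 2 ^ (q+1) := Nat.pow_pos (by norm_num)
          omega
        rw [htop, Finset.sum_Icc_succ_top (by omega), key]
        have hpos : 0 < 2 ^ (q+1) := Nat.pow_pos (by norm_num)
        have heq : (2 ^ (q + 1) + s - 1) + 1 = 2 ^ (q + 1) + s := by omega
        rw [heq]
        have hlog : Nat.log 2 (2 ^ (q + 1) + s) = q + 1 := by
          apply Nat.log_eq_of_pow_le_of_lt_pow
          · omega
          · rw [pow_succ]; omega
        rw [hlog]
        have : (s + 1) ^ 2 = s ^ 2 + 2 * s + 1 := by ring
        omega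

/-- Lemma: let `p ≥ 1` and let `s` be an integer with `0 < s ≤ 2^{p−1}`; set
`l = 2^{p−1} + s`. Then `Σ_{j=1}^{l−1} (2(j − 2^{⌊log₂ j⌋}) + 1) = (2^{2p−2} − 1)/3 + s²`
(the division by `3` is exact). -/
theorem partial_sum_A006257 (p s : ℕ) (hp : 1 ≤ p) (hs0 : 0 < s) (hs : s ≤ 2 ^ (p - 1)) :
    ∑ j ∈ Finset.Icc 1 (2 ^ (p - 1) + s - 1), (2 * (j - 2 ^ (Nat.log 2 j)) + 1)
      = (2 ^ (2 * p - 2) - 1) / 3 + s ^ 2 := by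
  have h := aux_sum (p - 1) s hs0 hs
  have : (2:ℕ) ^ (2 * p - 2) = 4 ^ (p - 1) := by
    rw [show (4:ℕ) = 2^2 from rfl, ← pow_mul, show 2 * (p-1) = 2*p - 2 by omega]
  rw [this]
  exact h
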